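/- arXiv:1105.2531 — 2 statements merged into one kernel-verified Lean document; each statement's English description precedes it below -/
import Mathlib

section
/- Let φ(t) = c·exp(1/(|t|-1)) on [-1,1] with ∫φ = 1. For every C > 1, the ratio G(C,ε) := φ([1-Cε,1]) / φ([1-ε,1]) tends to +∞ as ε ↘ 0, where φ(A) := ∫_A φ. -/
open MeasureTheory Real Set Filter

/-- `φ(t) = c · exp(1/(|t|-1))` (with the convention `φ(±1) = 0`). -/
noncomputable def phi (c t : ℝ) : ℝ := if |t| = 1 then 0 else c * Real.exp (1 / (|t| - 1))

lemma phi_measurable (c : ℝ) : Measurable (phi c) := by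
  unfold phi
  exact Measurable.ite (measurableSet_eq_fun (continuous_abs.measurable) measurable_const)
    measurable_const
    (measurable_const.mul (Real.measurable_exp.comp
      (measurable_const.div (continuous_abs.measurable.sub measurable_const))))

lemma phi_nonneg {c : ℝ} (hc : 0 < c) (t : ℝ) : 0 ≤ phi c t := by
  unfold phi
  split
  · exact le_rfl
  · positivity

lemma phi_eq {c t : ℝ} (h0 : 0 ≤ t) (h1 : t < 1) : phi c t = c * Real.exp (1 / (t - 1)) := by
  unfold phi
  rw [abs_of_nonneg h0, if_neg h1.ne]

lemma phi_intervalIntegrable {c : ℝ} (hc : 0 < c) {a b : ℝ}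
    (ha : a ∈ Set.Icc (-1:ℝ) 1) (hb : b ∈ Set.Icc (-1:ℝ) 1) :
    IntervalIntegrable (phi c) volume a b := by
  rw [intervalIntegrable_iff]
  have hsub : Set.uIoc a b ⊆ Set.Icc (-1:ℝ) 1 := fun x hx =>
    ⟨(le_min ha.1 hb.1).trans hx.1.le, hx.2.trans (max_le ha.2 hb.2)⟩
  refine MeasureTheory.Integrable.mono (g := fun _ => c)
    (integrableOn_const measure_Ioc_lt_top.ne)
    ((phi_measurable c).aestronglyMeasurable) ?_
  refine Filter.eventually_of_mem (self_mem_ae_restrict measurableSet_uIoc) (fun x hx => ?_)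
  have hx1 : |x| ≤ 1 := abs_le.2 ⟨(hsub hx).1, (hsub hx).2⟩
  rw [Real.norm_eq_abs, Real.norm_eq_abs, abs_of_nonneg (phi_nonneg hc x), abs_of_pos hc]
  unfold phi
  split
  · exact hc.le
  · rename_i h
    have h2 : |x| - 1 < 0 := lt_of_le_of_ne (by linarith) (fun hh => h (by linarith))
    have : Real.exp (1 / (|x| - 1)) ≤ 1 :=
      Real.exp_le_one_iff.2 (le_of_lt (div_neg_of_pos_of_neg one_pos h2))
    nlinarith

lemma integral_lb {c : ℝ} (hc : 0 < c) {δ δ' : ℝ} (hδ : 0 < δ) (hδδ' : δ ≤ δ') (h1 : δ' ≤ 1) :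
    (δ' - δ) * (c * Real.exp (-(1 / δ))) ≤ ∫ t in (1 - δ')..(1 - δ), phi c t := by
  have h := intervalIntegral.integral_mono_on (μ := volume)
    (f := fun _ => c * Real.exp (-(1 / δ))) (g := phi c)
    (by linarith : (1:ℝ) - δ' ≤ 1 - δ) intervalIntegrable_const
    (phi_intervalIntegrable hc ⟨by linarith, by linarith⟩ ⟨by linarith, by linarith⟩) ?_
  · rw [intervalIntegral.integral_const] at h
    rw [smul_eq_mul] at h
    calc (δ' - δ) * (c * Real.exp (-(1 / δ)))
        = ((1 - δ) - (1 - δ')) * (c * Real.exp (-(1 / δ))) := by ring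
      _ ≤ _ := h
  · intro x hx
    have hx0 : 0 ≤ x := by have := hx.1; linarith
    have hx1 : x < 1 := by have := hx.2; linarith
    rw [phi_eq hx0 hx1]
    have hb : x - 1 ≤ -δ := by have := hx.2; linarith
    have hneg : (-δ : ℝ) < 0 := by linarith
    have key : -(1 / δ) ≤ 1 / (x - 1) := by
      have := one_div_le_one_div_of_neg_of_le hneg hb
      rwa [one_div_neg_eq_neg_one_div] at this
    exact mul_le_mul_of_nonneg_left (Real.exp_le_exp.2 key) hc.le

lemma integral_ub {c : ℝ} (hc : 0 < c) {ε : ℝ} (hε : 0 < ε) (h1 : ε ≤ 1) :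
    ∫ t in (1 - ε)..1, phi c t ≤ ε * (c * Real.exp (-(1 / ε))) := by
  have h := intervalIntegral.integral_mono_on (μ := volume)
    (f := phi c) (g := fun _ => c * Real.exp (-(1 / ε)))
    (by linarith : (1:ℝ) - ε ≤ 1)
    (phi_intervalIntegrable hc ⟨by linarith, by linarith⟩ ⟨by norm_num, le_rfl⟩)
    intervalIntegrable_const ?_
  · rw [intervalIntegral.integral_const] at h
    rw [smul_eq_mul] at h
    calc ∫ t in (1 - ε)..1, phi c t ≤ (1 - (1 - ε)) * (c * Real.exp (-(1 / ε))) := h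
      _ = ε * (c * Real.exp (-(1 / ε))) := by ring
  · intro x hx
    have hx0 : 0 ≤ x := by have := hx.1; linarith
    rcases eq_or_lt_of_le hx.2 with heq | hlt
    · subst heq
      unfold phi
      rw [if_pos (by simp)]
      positivity
    · rw [phi_eq hx0 hlt]
      have ha : -ε ≤ x - 1 := by have := hx.1; linarith
      have hb : x - 1 < 0 := by linarith
      have key : 1 / (x - 1) ≤ -(1 / ε) := by
        have := one_div_le_one_div_of_neg_of_le hb ha
        rwa [one_div_neg_eq_neg_one_div] at this
      exact mul_le_mul_of_nonneg_left (Real.exp_le_exp.2 key) hc.le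

theorem stmt1 (c : ℝ) (hc : 0 < c)
    (hnorm : ∫ t in (-1:ℝ)..1, phi c t = 1) :
    ∀ C : ℝ, 1 < C →
      Tendsto (fun ε : ℝ => (∫ t in (1 - C * ε)..1, phi c t) / (∫ t in (1 - ε)..1, phi c t))
        (nhdsWithin 0 (Set.Ioi 0)) atTop := by
  intro C hC
  set B : ℝ := (1 + C) / 2 with hBdef
  have hB1 : 1 < B := by rw [hBdef]; linarith
  have hBC : B < C := by rw [hBdef]; linarith
  have hCB : 0 < C - B := by linarith
  have h1B : 0 < 1 - 1 / B := by
    have : 1 / B < 1 := by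
      rw [div_lt_one (by linarith)]; exact hB1
    linarith
  have hmain : Tendsto (fun ε : ℝ => (C - B) * Real.exp ((1 - 1 / B) / ε))
      (nhdsWithin 0 (Set.Ioi 0)) atTop := by
    have h1 : Tendsto (fun ε : ℝ => (1 - 1 / B) / ε) (nhdsWithin 0 (Set.Ioi 0)) atTop := by
      simp only [div_eq_mul_inv]
      exact tendsto_inv_nhdsGT_zero.const_mul_atTop h1B
    exact (Real.tendsto_exp_atTop.comp h1).const_mul_atTop hCB
  refine tendsto_atTop_mono' _ ?_ hmain
  have hmemIoo : Set.Ioo (0:ℝ) (1 / C) ∈ nhdsWithin (0:ℝ) (Set.Ioi 0) :=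
    Ioo_mem_nhdsGT_of_mem ⟨le_rfl, by positivity⟩
  filter_upwards [hmemIoo] with ε hε
  obtain ⟨hε0, hεC⟩ := hε
  have hCε1 : C * ε < 1 := (lt_div_iff₀' (by linarith : (0:ℝ) < C)).1 hεC
  have hε1 : ε < 1 := lt_trans (by nlinarith) hCε1
  -- denominator bounds
  have hden_ub : (∫ t in (1 - ε)..1, phi c t) ≤ ε * (c * Real.exp (-(1 / ε))) :=
    integral_ub hc hε0 hε1.le
  have hden_pos : 0 < ∫ t in (1 - ε)..1, phi c t := by
    have hlb : (ε - ε / 2) * (c * Real.exp (-(1 / (ε / 2)))) ≤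
        ∫ t in (1 - ε)..(1 - ε / 2), phi c t :=
      integral_lb hc (by linarith) (by linarith) (by linarith)
    have hmono : (∫ t in (1 - ε)..(1 - ε / 2), phi c t) ≤ ∫ t in (1 - ε)..1, phi c t := by
      refine intervalIntegral.integral_mono_interval le_rfl (by linarith) (by linarith)
        (Filter.Eventually.of_forall (phi_nonneg hc))
        (phi_intervalIntegrable hc ⟨by linarith, by linarith⟩ ⟨by norm_num, le_rfl⟩)
    have : 0 < (ε - ε / 2) * (c * Real.exp (-(1 / (ε / 2)))) :=
      mul_pos (by linarith) (mul_pos hc (Real.exp_pos _))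
    linarith
  -- numerator lower bound
  have hnum_lb : (C * ε - B * ε) * (c * Real.exp (-(1 / (B * ε)))) ≤
      ∫ t in (1 - C * ε)..1, phi c t := by
    have hlb : (C * ε - B * ε) * (c * Real.exp (-(1 / (B * ε)))) ≤
        ∫ t in (1 - C * ε)..(1 - B * ε), phi c t :=
      integral_lb hc (by nlinarith) (by nlinarith) (by nlinarith)
    have hmono : (∫ t in (1 - C * ε)..(1 - B * ε), phi c t) ≤
        ∫ t in (1 - C * ε)..1, phi c t := by
      refine intervalIntegral.integral_mono_interval le_rfl (by nlinarith) (by nlinarith)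
        (Filter.Eventually.of_forall (phi_nonneg hc))
        (phi_intervalIntegrable hc ⟨by nlinarith, by nlinarith⟩ ⟨by norm_num, le_rfl⟩)
    linarith
  have hnum_lb_nonneg : 0 ≤ (C * ε - B * ε) * (c * Real.exp (-(1 / (B * ε)))) :=
    mul_nonneg (by nlinarith) (mul_nonneg hc.le (Real.exp_pos _).le)
  have hnum_nonneg : 0 ≤ ∫ t in (1 - C * ε)..1, phi c t := le_trans hnum_lb_nonneg hnum_lb
  have hdiv : ((C * ε - B * ε) * (c * Real.exp (-(1 / (B * ε))))) /
        (ε * (c * Real.exp (-(1 / ε)))) ≤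
      (∫ t in (1 - C * ε)..1, phi c t) / (∫ t in (1 - ε)..1, phi c t) :=
    div_le_div₀ hnum_nonneg hnum_lb hden_pos hden_ub
  have hB0 : (0:ℝ) < B := by linarith
  have hexp : Real.exp (-(1 / (B * ε))) = Real.exp ((1 - 1 / B) / ε) * Real.exp (-(1 / ε)) := by
    rw [← Real.exp_add]
    congr 1
    field_simp
    ring
  have hkey : (C - B) * Real.exp ((1 - 1 / B) / ε) =
      ((C * ε - B * ε) * (c * Real.exp (-(1 / (B * ε))))) / (ε * (c * Real.exp (-(1 / ε)))) := by
    rw [hexp, eq_div_iff (ne_of_gt (mul_pos hε0 (mul_pos hc (Real.exp_pos _))))]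
    ring
  rw [hkey]
  exact hdiv
end

section
/- Let μ be a locally finite Borel measure on ℝ and x ∈ ℝ. Suppose ν = lim_i μ(B(x,r_i))⁻¹·(T_{x,r_i})_♯ μ is a tangent measure of μ at x, and z ∈ ℝ satisfies: there exist c_z > 0 and δ_z > 0 such that for every 0 < δ < δ_z there are infinitely many i with c_z⁻¹·δ ≤ μ(B(x + r_i·z, δ·r_i))/μ(B(x, r_i)) ≤ c_z·δ. Then 1/(2c_z) ≤ liminf_{δ↘0} ν(B(z,δ))/(2δ) and limsup_{δ↘0} ν(B(z,δ))/(2δ) ≤ c_z; in particular 0 < Θ¹_*(ν,z) ≤ Θ^{*1}(ν,z) < ∞. -/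
open MeasureTheory Metric Set Filter Topology

/-- Weak convergence of a sequence of (locally finite) Borel measures. -/
def WeakLim {E : Type*} [TopologicalSpace E] [MeasurableSpace E]
    (μs : ℕ → Measure E) (ν : Measure E) : Prop :=
  ∀ f : C(E, ℝ), HasCompactSupport f →
    Tendsto (fun i => ∫ x, f x ∂(μs i)) atTop (nhds (∫ x, f x ∂ν))

private lemma aux_le_of_freq {u : ℕ → ℝ} {L a : ℝ}
    (hu : Tendsto u atTop (nhds L)) (h : ∃ᶠ i in atTop, u i ≤ a) : L ≤ a := by
  by_contra hc
  push_neg at hc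
  have hev : ∀ᶠ i in atTop, a < u i := hu.eventually (eventually_gt_nhds hc)
  rcases (h.and_eventually hev).exists with ⟨i, h1, h2⟩
  exact absurd h1 (not_le.mpr h2)

private lemma aux_ge_of_freq {u : ℕ → ℝ} {L a : ℝ}
    (hu : Tendsto u atTop (nhds L)) (h : ∃ᶠ i in atTop, a ≤ u i) : a ≤ L := by
  by_contra hc
  push_neg at hc
  have hev : ∀ᶠ i in atTop, u i < a := hu.eventually (eventually_lt_nhds hc)
  rcases (h.and_eventually hev).exists with ⟨i, h1, h2⟩
  exact absurd h1 (not_le.mpr h2)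

/-- Sandwiching a continuous bump function between two closed balls. -/
private lemma aux_sandwich (m : Measure ℝ) (z s t : ℝ) (hst : s < t)
    (hm : m (closedBall z t) ≠ ⊤) (f : C(ℝ, ℝ))
    (hf1 : EqOn f 1 (closedBall z s)) (hf0 : EqOn f 0 (ball z t)ᶜ)
    (hf01 : ∀ y, f y ∈ Icc (0 : ℝ) 1) :
    (m (closedBall z s)).toReal ≤ ∫ y, f y ∂m ∧
      ∫ y, f y ∂m ≤ (m (closedBall z t)).toReal := by
  set g1 : ℝ → ℝ := (closedBall z s).indicator fun _ => (1 : ℝ) with hg1def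
  set g2 : ℝ → ℝ := (closedBall z t).indicator fun _ => (1 : ℝ) with hg2def
  have hg2int : Integrable g2 m := by
    rw [hg2def, integrable_indicator_iff measurableSet_closedBall]
    exact (integrableOn_const_iff).mpr (Or.inr (lt_top_iff_ne_top.mpr hm))
  have hg1int : Integrable g1 m := by
    rw [hg1def, integrable_indicator_iff measurableSet_closedBall]
    refine (integrableOn_const_iff).mpr (Or.inr ?_)
    exact lt_of_le_of_lt (measure_mono (closedBall_subset_closedBall hst.le))
      (lt_top_iff_ne_top.mpr hm)
  have hfg2 : ∀ y, f y ≤ g2 y := by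
    intro y
    by_cases hy : y ∈ closedBall z t
    · rw [hg2def, Set.indicator_of_mem hy]
      exact (hf01 y).2
    · rw [hg2def, Set.indicator_of_notMem hy]
      have : y ∈ (ball z t)ᶜ := fun h => hy (ball_subset_closedBall h)
      simp [hf0 this]
  have hfint : Integrable (fun y => f y) m := by
    refine hg2int.mono' f.continuous.aestronglyMeasurable (ae_of_all _ fun y => ?_)
    rw [Real.norm_eq_abs, abs_of_nonneg (hf01 y).1]
    exact hfg2 y
  have hg1f : ∀ y, g1 y ≤ f y := by
    intro y
    by_cases hy : y ∈ closedBall z s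
    · rw [hg1def, Set.indicator_of_mem hy]
      exact le_of_eq (hf1 hy).symm
    · rw [hg1def, Set.indicator_of_notMem hy]
      exact (hf01 y).1
  constructor
  · have := integral_mono hg1int hfint hg1f
    rwa [hg1def, integral_indicator_const (1 : ℝ) measurableSet_closedBall,
      smul_eq_mul, mul_one] at this
  · have := integral_mono hfint hg2int hfg2
    rwa [hg2def, integral_indicator_const (1 : ℝ) measurableSet_closedBall,
      smul_eq_mul, mul_one] at this

theorem stmt7 (μ ν : Measure ℝ) [IsLocallyFiniteMeasure μ] [IsLocallyFiniteMeasure ν]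
    (hν : ν ≠ 0) (x : ℝ) (r : ℕ → ℝ) (hr : ∀ i, 0 < r i)
    (hr0 : Tendsto r atTop (nhds 0))
    (hlim : WeakLim (fun i => (μ (closedBall x (r i)))⁻¹ •
      Measure.map (fun y => (y - x) / r i) μ) ν)
    (z : ℝ) (cz δz : ℝ) (hcz : 0 < cz) (hδz : 0 < δz)
    (hcomp : ∀ δ : ℝ, 0 < δ → δ < δz →
      ∃ᶠ i in atTop,
        cz⁻¹ * δ ≤ (μ (closedBall (x + r i * z) (δ * r i))).toReal /
            (μ (closedBall x (r i))).toReal ∧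
          (μ (closedBall (x + r i * z) (δ * r i))).toReal /
            (μ (closedBall x (r i))).toReal ≤ cz * δ) :
    ENNReal.ofReal (1 / (2 * cz)) ≤
        Filter.liminf (fun δ : ℝ => ν (closedBall z δ) / ENNReal.ofReal (2 * δ))
          (nhdsWithin 0 (Set.Ioi 0)) ∧
      Filter.limsup (fun δ : ℝ => ν (closedBall z δ) / ENNReal.ofReal (2 * δ))
          (nhdsWithin 0 (Set.Ioi 0)) ≤ ENNReal.ofReal cz := by
  set m : ℕ → Measure ℝ := fun i => (μ (closedBall x (r i)))⁻¹ •
      Measure.map (fun y => (y - x) / r i) μ with hmdef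
  -- basic computation of the rescaled measures on closed balls
  have hmap : ∀ i (ρ : ℝ),
      m i (closedBall z ρ) =
        (μ (closedBall x (r i)))⁻¹ * μ (closedBall (x + r i * z) (ρ * r i)) := by
    intro i ρ
    have hri := hr i
    have hT : Measurable fun y : ℝ => (y - x) / r i :=
      (measurable_id.sub_const x).div_const _
    rw [hmdef]
    simp only [Measure.smul_apply, smul_eq_mul]
    congr 1
    rw [Measure.map_apply hT measurableSet_closedBall]
    congr 1
    ext y
    simp only [mem_preimage, mem_closedBall, Real.dist_eq]
    rw [show (y - x) / r i - z = (y - (x + r i * z)) / r i by field_simp; ring,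
      abs_div, abs_of_pos hri, div_le_iff₀ hri]
  have hbfin : ∀ i, μ (closedBall x (r i)) ≠ ⊤ := fun i => measure_closedBall_lt_top.ne
  have hafin : ∀ i (ρ : ℝ), μ (closedBall (x + r i * z) (ρ * r i)) ≠ ⊤ :=
    fun i ρ => measure_closedBall_lt_top.ne
  -- at indices where the comparability holds, the value of m i is the given ratio
  have hkey : ∀ (δ : ℝ), 0 < δ →
      ∀ i, cz⁻¹ * δ ≤ (μ (closedBall (x + r i * z) (δ * r i))).toReal /
          (μ (closedBall x (r i))).toReal →
      μ (closedBall x (r i)) ≠ 0 ∧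
      (∀ ρ : ℝ, m i (closedBall z ρ) ≠ ⊤) ∧
      (m i (closedBall z δ)).toReal =
        (μ (closedBall (x + r i * z) (δ * r i))).toReal /
          (μ (closedBall x (r i))).toReal := by
    intro δ hδ i hi
    have hb0 : μ (closedBall x (r i)) ≠ 0 := by
      intro h
      rw [h] at hi
      simp only [ENNReal.toReal_zero, div_zero] at hi
      exact absurd hi (not_le.mpr (by positivity))
    refine ⟨hb0, fun ρ => ?_, ?_⟩
    · rw [hmap i ρ]
      exact ENNReal.mul_ne_top (ENNReal.inv_ne_top.mpr hb0) (hafin i ρ)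
    · rw [hmap i δ, ENNReal.toReal_mul, ENNReal.toReal_inv, div_eq_inv_mul]
  -- Part 2: the limsup bound
  have upper : ∀ δ : ℝ, 0 < δ → δ < δz / 2 →
      ν (closedBall z δ) / ENNReal.ofReal (2 * δ) ≤ ENNReal.ofReal cz := by
    intro δ hδ hδ2
    set t : ℝ := 3 / 2 * δ with htdef
    have hδt : δ < t := by rw [htdef]; linarith
    have htδz : t < δz := by rw [htdef]; linarith
    have ht : 0 < t := lt_trans hδ hδt
    obtain ⟨f, hf1, hf0, hfc, hf01⟩ :=
      exists_continuous_one_zero_of_isCompact (isCompact_closedBall z δ)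
        isOpen_ball.isClosed_compl
        (disjoint_compl_right_iff_subset.mpr (closedBall_subset_ball hδt))
    have hlimf := hlim f hfc
    -- frequently, the integral against m i is at most cz * t
    have hfreq : ∃ᶠ i in atTop, (∫ y, f y ∂(m i)) ≤ cz * t := by
      refine (hcomp t ht htδz).mono fun i hi => ?_
      obtain ⟨hb0, hfin, hval⟩ := hkey t ht i hi.1
      have hsw := (aux_sandwich (m i) z δ t hδt (hfin t) f hf1 hf0 hf01).2
      calc (∫ y, f y ∂(m i)) ≤ (m i (closedBall z t)).toReal := hsw
        _ ≤ cz * t := by rw [hval]; exact hi.2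
    have hνle : (∫ y, f y ∂ν) ≤ cz * t := aux_le_of_freq hlimf hfreq
    have hνfin : ν (closedBall z t) ≠ ⊤ := measure_closedBall_lt_top.ne
    have hν1 : (ν (closedBall z δ)).toReal ≤ cz * t :=
      le_trans (aux_sandwich ν z δ t hδt hνfin f hf1 hf0 hf01).1 hνle
    have hν2 : ν (closedBall z δ) ≤ ENNReal.ofReal (cz * (2 * δ)) := by
      rw [ENNReal.le_ofReal_iff_toReal_le measure_closedBall_lt_top.ne (by positivity)]
      calc (ν (closedBall z δ)).toReal ≤ cz * t := hν1
        _ ≤ cz * (2 * δ) := by rw [htdef]; nlinarith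
    calc ν (closedBall z δ) / ENNReal.ofReal (2 * δ)
        ≤ ENNReal.ofReal (cz * (2 * δ)) / ENNReal.ofReal (2 * δ) :=
          ENNReal.div_le_div_right hν2 _
      _ = ENNReal.ofReal (cz * (2 * δ) / (2 * δ)) :=
          (ENNReal.ofReal_div_of_pos (by positivity)).symm
      _ = ENNReal.ofReal cz := by rw [mul_div_assoc, div_self (by positivity), mul_one]
  -- Part 1: the liminf bound
  have lower : ∀ δ : ℝ, 0 < δ → δ < δz →
      ENNReal.ofReal (1 / (2 * cz)) ≤ ν (closedBall z δ) / ENNReal.ofReal (2 * δ) := by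
    intro δ hδ hδz'
    have hclaim : ∀ s : ℝ, 0 < s → s < δ → cz⁻¹ * s ≤ (ν (closedBall z δ)).toReal := by
      intro s hs hsδ
      obtain ⟨f, hf1, hf0, hfc, hf01⟩ :=
        exists_continuous_one_zero_of_isCompact (isCompact_closedBall z s)
          isOpen_ball.isClosed_compl
          (disjoint_compl_right_iff_subset.mpr (closedBall_subset_ball hsδ))
      have hlimf := hlim f hfc
      have hfreq : ∃ᶠ i in atTop, cz⁻¹ * s ≤ (∫ y, f y ∂(m i)) := by
        refine (hcomp s hs (lt_trans hsδ hδz')).mono fun i hi => ?_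
        obtain ⟨hb0, hfin, hval⟩ := hkey s hs i hi.1
        have hsw := (aux_sandwich (m i) z s δ hsδ (hfin δ) f hf1 hf0 hf01).1
        calc cz⁻¹ * s ≤ (m i (closedBall z s)).toReal := by rw [hval]; exact hi.1
          _ ≤ (∫ y, f y ∂(m i)) := hsw
      have hνge : cz⁻¹ * s ≤ (∫ y, f y ∂ν) := aux_ge_of_freq hlimf hfreq
      have hνfin : ν (closedBall z δ) ≠ ⊤ := measure_closedBall_lt_top.ne
      exact le_trans hνge (aux_sandwich ν z s δ hsδ hνfin f hf1 hf0 hf01).2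
    have hδbound : cz⁻¹ * δ ≤ (ν (closedBall z δ)).toReal := by
      have htend : Tendsto (fun s : ℝ => cz⁻¹ * s) (𝓝[<] δ) (nhds (cz⁻¹ * δ)) :=
        ((continuous_const.mul continuous_id).tendsto δ).mono_left nhdsWithin_le_nhds
      refine le_of_tendsto htend ?_
      filter_upwards [Ioo_mem_nhdsLT_of_mem (⟨hδ, le_rfl⟩ : δ ∈ Ioc 0 δ)] with s hs
      exact hclaim s hs.1 hs.2
    have hν2 : ENNReal.ofReal (cz⁻¹ * δ) ≤ ν (closedBall z δ) :=
      ENNReal.ofReal_le_of_le_toReal hδbound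
    calc ENNReal.ofReal (1 / (2 * cz))
        = ENNReal.ofReal (cz⁻¹ * δ / (2 * δ)) := by
          congr 1
          field_simp
      _ = ENNReal.ofReal (cz⁻¹ * δ) / ENNReal.ofReal (2 * δ) :=
          ENNReal.ofReal_div_of_pos (by positivity)
      _ ≤ ν (closedBall z δ) / ENNReal.ofReal (2 * δ) :=
          ENNReal.div_le_div_right hν2 _
  constructor
  · refine le_liminf_of_le ?_ ?_
    · isBoundedDefault
    · filter_upwards [Ioo_mem_nhdsGT_of_mem (⟨le_rfl, hδz⟩ : (0 : ℝ) ∈ Ico 0 δz)] with δ hδ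
      exact lower δ hδ.1 hδ.2
  · refine limsup_le_of_le ?_ ?_
    · isBoundedDefault
    · filter_upwards [Ioo_mem_nhdsGT_of_mem
        (⟨le_rfl, by positivity⟩ : (0 : ℝ) ∈ Ico 0 (δz / 2))] with δ hδ
      exact upper δ hδ.1 hδ.2
end
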